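/- Let ρ : ℝ^p → [0, ∞) be continuous with ρ(y) → 0 as ‖y‖ → ∞, set D(α) = {y ∈ ℝ^p : ρ(y) ≥ α} and D_0(α) = {y ∈ ℝ^p : ρ(y) > α}. Then for every α with 0 < α < sup_y ρ(y), lim_{δ → 0⁺} d_H(D(α + δ), D(α)) = d_H(closure(D_0(α)), D(α)); in particular, if the closure of D_0(α) equals D(α), then d_H(D(α + δ), D(α)) → 0 as δ → 0⁺. -/

import Mathlib

open MeasureTheory Filter Metric

/-- The α-trimmed region `D(α) = {y : ρ(y) ≥ α}` of a depth function `ρ`. -/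
def Dset {E : Type*} (ρ : E → ℝ) (a : ℝ) : Set E := {y | a ≤ ρ y}

/-- `α(r) = sup {α : μ(D(α)) ≥ r}`, the depth level of the 100r% central region. -/
noncomputable def alphaLevel {E : Type*} [MeasurableSpace E]
    (μ : Measure E) (ρ : E → ℝ) (r : ℝ) : ℝ :=
  sSup {a : ℝ | ENNReal.ofReal r ≤ μ (Dset ρ a)}

theorem stmt12
    {p : ℕ} (hp : 1 ≤ p)
    (ρ : EuclideanSpace ℝ (Fin p) → ℝ) (hρ_cont : Continuous ρ)
    (hρ_nonneg : ∀ y, 0 ≤ ρ y)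
    (hρ_lim : Tendsto ρ (comap (fun y : EuclideanSpace ℝ (Fin p) => ‖y‖) atTop) (nhds 0))
    (α : ℝ) (hα_pos : 0 < α) (hα_lt : α < ⨆ y, ρ y) :
    Tendsto (fun δ : ℝ => hausdorffDist (Dset ρ (α + δ)) (Dset ρ α))
      (nhdsWithin 0 (Set.Ioi 0))
      (nhds (hausdorffDist (closure {y | α < ρ y}) (Dset ρ α))) ∧
    (closure {y : EuclideanSpace ℝ (Fin p) | α < ρ y} = Dset ρ α →
      Tendsto (fun δ : ℝ => hausdorffDist (Dset ρ (α + δ)) (Dset ρ α))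
        (nhdsWithin 0 (Set.Ioi 0)) (nhds 0)) := by
  classical
  set K : Set (EuclideanSpace ℝ (Fin p)) := Dset ρ α with hKdef
  set D0 : Set (EuclideanSpace ℝ (Fin p)) := {y | α < ρ y} with hD0def
  obtain ⟨y₀, hy₀⟩ : ∃ y, α < ρ y := by
    by_contra h
    push_neg at h
    exact absurd (ciSup_le h) (not_le.mpr hα_lt)
  have hy₀K : y₀ ∈ K := hy₀.le
  -- K is compact and bounded
  have hIio : ρ ⁻¹' (Set.Iio α) ∈ comap (fun y : EuclideanSpace ℝ (Fin p) => ‖y‖) atTop :=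
    hρ_lim (Iio_mem_nhds hα_pos)
  obtain ⟨t, ht, hsub⟩ := Filter.mem_comap.mp hIio
  obtain ⟨R, hR⟩ := mem_atTop_sets.mp ht
  have hKsub : K ⊆ closedBall 0 R := by
    intro y hy
    rw [mem_closedBall, dist_zero_right]
    by_contra h
    push_neg at h
    have hlt : ρ y < α := hsub (hR _ h.le)
    exact absurd (show α ≤ ρ y from hy) hlt.not_ge
  have hKclosed : IsClosed K := isClosed_le continuous_const hρ_cont
  have hKcompact : IsCompact K :=
    (isCompact_closedBall (0 : EuclideanSpace ℝ (Fin p)) R).of_isClosed_subset hKclosed hKsub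
  have hKbdd : Bornology.IsBounded K := (Metric.isBounded_closedBall).subset hKsub
  have hD0K : D0 ⊆ K := fun y hy => le_of_lt (show α < ρ y from hy)
  have hclK : closure D0 ⊆ K := closure_minimal hD0K hKclosed
  have hclne : (closure D0).Nonempty := ⟨y₀, subset_closure hy₀⟩
  have hKne : K.Nonempty := ⟨y₀, hy₀K⟩
  have hne' : ∀ S : Set (EuclideanSpace ℝ (Fin p)), S.Nonempty → S ⊆ K →
      Metric.hausdorffEDist S K ≠ ⊤ := fun S hS hSK =>
    hausdorffEdist_ne_top_of_nonempty_of_bounded hS hKne (hKbdd.subset hSK) hKbdd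
  set L : ℝ := hausdorffDist (closure D0) K with hLdef
  have hL0 : 0 ≤ L := hausdorffDist_nonneg
  have hmain : Tendsto (fun δ : ℝ => hausdorffDist (Dset ρ (α + δ)) (Dset ρ α))
      (nhdsWithin 0 (Set.Ioi 0)) (nhds L) := by
    rw [Metric.tendsto_nhds]
    intro ε hε
    -- cover K by balls of radius L + ε/2 centered in D0
    have hcov : K ⊆ ⋃ s ∈ D0, ball s (L + ε / 2) := by
      intro x hx
      have h1 : infDist x (closure D0) ≤ L := by
        have hfin : Metric.hausdorffEDist K (closure D0) ≠ ⊤ := by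
          rw [Metric.hausdorffEDist_comm]; exact hne' _ hclne hclK
        have h2 := infDist_le_hausdorffDist_of_mem hx hfin
        rwa [hausdorffDist_comm] at h2
      have h3 : infDist x (closure D0) < L + ε / 4 := lt_of_le_of_lt h1 (by linarith)
      obtain ⟨s, hs, hds⟩ := (infDist_lt_iff hclne).mp h3
      obtain ⟨s', hs', hds'⟩ := Metric.mem_closure_iff.mp hs (ε / 4) (by linarith)
      refine Set.mem_biUnion hs' ?_
      rw [mem_ball]
      calc dist x s' ≤ dist x s + dist s s' := dist_triangle _ _ _
        _ < L + ε / 2 := by linarith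
    obtain ⟨T, hTD0, hTfin, hTcov⟩ :=
      hKcompact.elim_finite_subcover_image (fun s _ => isOpen_ball) hcov
    have hFne : hTfin.toFinset.Nonempty := by
      rcases Set.mem_iUnion₂.mp (hTcov hy₀K) with ⟨s, hs, _⟩
      exact ⟨s, hTfin.mem_toFinset.mpr hs⟩
    set δ₀ : ℝ := hTfin.toFinset.inf' hFne (fun s => ρ s - α) with hδ₀def
    have hδ₀pos : 0 < δ₀ := by
      rw [hδ₀def, Finset.lt_inf'_iff]
      intro s hs
      exact sub_pos.mpr (hTD0 (hTfin.mem_toFinset.mp hs))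
    filter_upwards [Ioo_mem_nhdsGT_of_mem (Set.mem_Ico.mpr ⟨le_refl (0 : ℝ), hδ₀pos⟩)]
      with δ hδ
    obtain ⟨hδpos, hδlt⟩ := hδ
    have hTsub : T ⊆ Dset ρ (α + δ) := by
      intro s hs
      have h4 : δ₀ ≤ ρ s - α := Finset.inf'_le _ (hTfin.mem_toFinset.mpr hs)
      show α + δ ≤ ρ s
      linarith
    obtain ⟨s₀, hs₀⟩ := hFne
    have hDδne : (Dset ρ (α + δ)).Nonempty := ⟨s₀, hTsub (hTfin.mem_toFinset.mp hs₀)⟩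
    have hDδD0 : Dset ρ (α + δ) ⊆ D0 := by
      intro y hy
      have h6 : α + δ ≤ ρ y := hy
      show α < ρ y
      linarith
    have hDδK : Dset ρ (α + δ) ⊆ K := hDδD0.trans hD0K
    -- lower bound : L ≤ f δ
    have hlow : L ≤ hausdorffDist (Dset ρ (α + δ)) K := by
      rw [hLdef]
      apply hausdorffDist_le_of_infDist hausdorffDist_nonneg
      · intro x hx
        have : infDist x K = 0 := infDist_zero_of_mem (hclK hx)
        rw [this]
        exact hausdorffDist_nonneg
      · intro x hx
        calc infDist x (closure D0)
            ≤ infDist x (Dset ρ (α + δ)) :=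
              infDist_le_infDist_of_subset ((subset_closure.trans (closure_mono hDδD0))) hDδne
          _ ≤ hausdorffDist (Dset ρ (α + δ)) K := by
              have hfin : Metric.hausdorffEDist K (Dset ρ (α + δ)) ≠ ⊤ := by
                rw [Metric.hausdorffEDist_comm]; exact hne' _ hDδne hDδK
              have h5 := infDist_le_hausdorffDist_of_mem hx hfin
              rwa [hausdorffDist_comm] at h5
    -- upper bound : f δ ≤ L + ε/2
    have hup : hausdorffDist (Dset ρ (α + δ)) K ≤ L + ε / 2 := by
      apply hausdorffDist_le_of_infDist (by linarith)
      · intro x hx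
        rw [infDist_zero_of_mem (hDδK hx)]
        linarith
      · intro x hx
        rcases Set.mem_iUnion₂.mp (hTcov hx) with ⟨s, hs, hxs⟩
        have : infDist x (Dset ρ (α + δ)) ≤ dist x s :=
          infDist_le_dist_of_mem (hTsub hs)
        rw [mem_ball] at hxs
        linarith
    rw [Real.dist_eq, abs_lt]
    constructor <;> [linarith; linarith]
  refine ⟨hmain, fun hcl => ?_⟩
  have hL0' : L = 0 := by
    rw [hLdef, show closure D0 = K from hcl, hausdorffDist_self_zero]
  rw [hL0'] at hmain
  exact hmain
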